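/- arXiv:2511.07462 — 2 statements merged into one kernel-verified Lean document; each statement's English description precedes it below -/
import Mathlib

section
/- For every natural number n and every real number x, the geometric polynomial is given by the Laplace-type integral w_n(x) = ∫_{0}^{∞} φ_n(x·λ) · e^{-λ} dλ. -/
open Finset MeasureTheory

/-- Stirling numbers of the second kind, via the standard recurrence. -/
def stirling2 : ℕ → ℕ → ℕ
  | 0, 0 => 1
  | 0, _ + 1 => 0
  | _ + 1, 0 => 0
  | n + 1, k + 1 => stirling2 n k + (k + 1) * stirling2 n (k + 1)

/-- Geometric (Fubini) polynomials: `w_n(x) = Σ_{k=0}^{n} k! S(n,k) x^k`. -/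
noncomputable def geomPoly (n : ℕ) (x : ℝ) : ℝ :=
  ∑ k ∈ Finset.range (n + 1), (Nat.factorial k : ℝ) * (stirling2 n k : ℝ) * x ^ k

/-- Exponential (Bell) polynomials: `φ_n(x) = Σ_{k=0}^{n} S(n,k) x^k`. -/
noncomputable def bellPoly (n : ℕ) (x : ℝ) : ℝ :=
  ∑ k ∈ Finset.range (n + 1), (stirling2 n k : ℝ) * x ^ k

lemma integrableOn_pow_mul_exp_neg (k : ℕ) :
    IntegrableOn (fun l : ℝ => l ^ k * Real.exp (-l)) (Set.Ioi 0) := by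
  have h := Real.GammaIntegral_convergent (s := (k + 1 : ℝ)) (by positivity)
  refine h.congr_fun (fun l hl => ?_) measurableSet_Ioi
  rw [add_sub_cancel_right]
  dsimp only
  rw [Real.rpow_natCast, mul_comm]

lemma integral_pow_mul_exp_neg (k : ℕ) :
    ∫ l in Set.Ioi (0 : ℝ), l ^ k * Real.exp (-l) = k.factorial := by
  have h := Real.Gamma_eq_integral (s := (k + 1 : ℝ)) (by positivity)
  rw [Real.Gamma_nat_eq_factorial] at h
  rw [h]
  refine Eq.symm (setIntegral_congr_fun measurableSet_Ioi fun l hl => ?_)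
  rw [add_sub_cancel_right, Real.rpow_natCast, mul_comm]

/-- `w_n(x) = ∫_0^∞ φ_n(x λ) e^{-λ} dλ`. -/
theorem geomPoly_eq_integral_bellPoly (n : ℕ) (x : ℝ) :
    geomPoly n x = ∫ l in Set.Ioi (0 : ℝ), bellPoly n (x * l) * Real.exp (-l) := by
  unfold geomPoly bellPoly
  have : ∀ l : ℝ, (∑ k ∈ Finset.range (n + 1), (stirling2 n k : ℝ) * (x * l) ^ k) * Real.exp (-l)
      = ∑ k ∈ Finset.range (n + 1), (stirling2 n k : ℝ) * x ^ k * (l ^ k * Real.exp (-l)) := by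
    intro l
    rw [Finset.sum_mul]
    exact Finset.sum_congr rfl fun k _ => by ring
  simp_rw [this]
  rw [MeasureTheory.integral_finset_sum _
    fun k _ => ((integrableOn_pow_mul_exp_neg k).const_mul _)]
  refine Finset.sum_congr rfl fun k _ => ?_
  rw [integral_const_mul, integral_pow_mul_exp_neg]
  ring
end

section
/- For every real number x, there exists r > 0 such that for all real z with |z| < r, the series Σ_{n=0}^{∞} w_n(x) · z^n/n! converges and its sum equals the integral ∫_{0}^{∞} e^{-λ·(1 - x·(e^{z} - 1))} dλ. -/
open Finset MeasureTheory

noncomputable def Aux (n k : ℕ) : ℝ :=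
  ∑ i ∈ Finset.range (k+1), (-1:ℝ)^(k+i) * (k.choose i) * (i:ℝ)^n

lemma neg_one_pow_add_eq (k i : ℕ) (h : i ≤ k) : (-1:ℝ)^(k+i) = (-1)^(k-i) := by
  have hki : k + i = (k - i) + 2*i := by omega
  rw [hki, pow_add, pow_mul]
  norm_num

lemma Aux_zero (k : ℕ) : Aux 0 k = if k = 0 then 1 else 0 := by
  have h : Aux 0 k = ∑ i ∈ Finset.range (k+1), (1:ℝ)^i * (-1)^(k-i) * (k.choose i) := by
    rw [Aux]
    refine Finset.sum_congr rfl fun i hi => ?_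
    rw [neg_one_pow_add_eq k i (by simpa using Nat.lt_succ_iff.mp (Finset.mem_range.mp hi))]
    ring
  rw [h, ← add_pow (1:ℝ) (-1) k]
  norm_num [zero_pow_eq]

lemma stirling2_eq_zero {n k : ℕ} (h : n < k) : stirling2 n k = 0 := by
  induction n generalizing k with
  | zero =>
    cases k with
    | zero => omega
    | succ k => rfl
  | succ n ih =>
    cases k with
    | zero => omega
    | succ k =>
      show stirling2 n k + (k + 1) * stirling2 n (k + 1) = 0
      rw [ih (by omega), ih (by omega)]
      simp

lemma Aux_rec (n k : ℕ) : Aux (n+1) (k+1) = ((k:ℝ)+1) * (Aux n k + Aux n (k+1)) := by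
  have hL : Aux (n+1) (k+1)
      = ∑ j ∈ Finset.range (k+1), (-1:ℝ)^(k+j) * (((k:ℝ)+1) * (k.choose j)) * ((j:ℝ)+1)^n := by
    rw [Aux, Finset.sum_range_succ']
    have h0 : ((0:ℕ):ℝ)^(n+1) = 0 := by norm_num
    rw [h0]
    simp only [mul_zero, add_zero]
    refine Finset.sum_congr rfl fun j hj => ?_
    have hc : ((k:ℝ)+1) * (k.choose j : ℝ) = ((k+1).choose (j+1) : ℝ) * ((j:ℝ)+1) := by
      have := Nat.add_one_mul_choose_eq k j
      exact_mod_cast congrArg (Nat.cast (R := ℝ)) this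
    have hs : (-1:ℝ)^(k+1+(j+1)) = (-1)^(k+j) := by
      have he : k+1+(j+1) = (k+j)+2 := by omega
      rw [he, pow_add]; norm_num
    have hcast : ((j+1:ℕ):ℝ) = (j:ℝ)+1 := by push_cast; ring
    rw [hs, hcast]
    rw [pow_succ]
    linear_combination ((-1:ℝ)^(k+j) * ((j:ℝ)+1)^n) * hc.symm
  have hR : Aux n k + Aux n (k+1)
      = ∑ j ∈ Finset.range (k+1), (-1:ℝ)^(k+j) * (k.choose j) * ((j:ℝ)+1)^n := by
    have h1 : Aux n (k+1)
        = ∑ j ∈ Finset.range (k+1),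
            (-1:ℝ)^(k+j) * ((k.choose j : ℝ) + (k.choose (j+1) : ℝ)) * ((j:ℝ)+1)^n
          + (-1:ℝ)^(k+1) * ((0:ℕ):ℝ)^n := by
      rw [Aux, Finset.sum_range_succ']
      congr 1
      · refine Finset.sum_congr rfl fun j hj => ?_
        have hc : ((k+1).choose (j+1) : ℝ) = (k.choose j : ℝ) + (k.choose (j+1) : ℝ) := by
          rw [Nat.choose_succ_succ]; push_cast; ring
        have hs : (-1:ℝ)^(k+1+(j+1)) = (-1)^(k+j) := by
          have he : k+1+(j+1) = (k+j)+2 := by omega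
          rw [he, pow_add]; norm_num
        have hcast : ((j+1:ℕ):ℝ) = (j:ℝ)+1 := by push_cast; ring
        rw [hs, hcast, hc]
      · norm_num
    have h2 : Aux n k
        = -(∑ j ∈ Finset.range (k+1), (-1:ℝ)^(k+j) * (k.choose (j+1) : ℝ) * ((j:ℝ)+1)^n)
          + (-1:ℝ)^k * ((0:ℕ):ℝ)^n := by
      rw [Aux, Finset.sum_range_succ']
      congr 1
      rw [← Finset.sum_neg_distrib]
      rw [Finset.sum_range_succ]
      have htop : (-1:ℝ)^(k+k) * (k.choose (k+1) : ℝ) * ((k:ℝ)+1)^n = 0 := by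
        rw [Nat.choose_succ_self]; norm_num
      simp only [htop, neg_zero, add_zero]
      refine Finset.sum_congr rfl fun j hj => ?_
      have hs : (-1:ℝ)^(k+(j+1)) = -(-1:ℝ)^(k+j) := by
        have he : k+(j+1) = (k+j)+1 := by omega
        rw [he, pow_succ]; ring
      have hcast : ((j+1:ℕ):ℝ) = (j:ℝ)+1 := by push_cast; ring
      rw [hs, hcast]
      ring
      simp
    rw [h1, h2]
    have hsign : (-1:ℝ)^k * ((0:ℕ):ℝ)^n + (-1:ℝ)^(k+1) * ((0:ℕ):ℝ)^n = 0 := by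
      rw [pow_succ]; ring
    have hsplit : ∑ j ∈ Finset.range (k+1),
          (-1:ℝ)^(k+j) * ((k.choose j : ℝ) + (k.choose (j+1) : ℝ)) * ((j:ℝ)+1)^n
        = (∑ j ∈ Finset.range (k+1), (-1:ℝ)^(k+j) * (k.choose j : ℝ) * ((j:ℝ)+1)^n)
          + ∑ j ∈ Finset.range (k+1), (-1:ℝ)^(k+j) * (k.choose (j+1) : ℝ) * ((j:ℝ)+1)^n := by
      rw [← Finset.sum_add_distrib]
      exact Finset.sum_congr rfl fun j _ => by ring
    rw [hsplit]
    linarith [hsign]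
  rw [hL, hR, Finset.mul_sum]
  refine Finset.sum_congr rfl fun j hj => ?_
  ring

lemma factorial_stirling2 (n : ℕ) : ∀ k, (k.factorial : ℝ) * (stirling2 n k : ℝ) = Aux n k := by
  induction n with
  | zero =>
    intro k
    cases k with
    | zero => simp [Aux, stirling2]
    | succ k =>
      rw [Aux_zero]
      simp [stirling2]
  | succ n ih =>
    intro k
    cases k with
    | zero =>
      show ((1:ℕ):ℝ) * (stirling2 (n+1) 0 : ℝ) = Aux (n+1) 0
      simp [Aux, stirling2]
    | succ k =>
      have hdef : stirling2 (n+1) (k+1) = stirling2 n k + (k + 1) * stirling2 n (k + 1) := rfl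
      rw [hdef, Aux_rec, ← ih k, ← ih (k+1)]
      push_cast [Nat.factorial_succ]
      ring

lemma hasSum_exp_mul (c : ℝ) : HasSum (fun n : ℕ => c ^ n / (n.factorial : ℝ)) (Real.exp c) := by
  rw [Real.exp_eq_exp_ℝ]
  exact NormedSpace.expSeries_div_hasSum_exp c

lemma hasSum_Aux (k : ℕ) (z : ℝ) :
    HasSum (fun n : ℕ => Aux n k * z ^ n / (n.factorial : ℝ)) ((Real.exp z - 1) ^ k) := by
  have h2 : HasSum
      (fun n : ℕ => ∑ i ∈ Finset.range (k+1),
        (-1:ℝ)^(k+i) * (k.choose i : ℝ) * (((i:ℝ)*z) ^ n / (n.factorial : ℝ)))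
      (∑ i ∈ Finset.range (k+1), (-1:ℝ)^(k+i) * (k.choose i : ℝ) * Real.exp ((i:ℝ)*z)) :=
    hasSum_sum fun i _ => (hasSum_exp_mul ((i:ℝ)*z)).mul_left _
  have hfun : (fun n : ℕ => ∑ i ∈ Finset.range (k+1),
        (-1:ℝ)^(k+i) * (k.choose i : ℝ) * (((i:ℝ)*z) ^ n / (n.factorial : ℝ)))
      = fun n : ℕ => Aux n k * z ^ n / (n.factorial : ℝ) := by
    funext n
    rw [Aux, Finset.sum_mul, Finset.sum_div]
    exact Finset.sum_congr rfl fun i _ => by rw [mul_pow]; ring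
  have hval : (∑ i ∈ Finset.range (k+1), (-1:ℝ)^(k+i) * (k.choose i : ℝ) * Real.exp ((i:ℝ)*z))
      = (Real.exp z - 1) ^ k := by
    rw [sub_eq_add_neg, add_pow]
    refine Finset.sum_congr rfl fun i hi => ?_
    have hle : i ≤ k := Nat.lt_succ_iff.mp (Finset.mem_range.mp hi)
    rw [Real.exp_nat_mul, neg_one_pow_add_eq k i hle]
    ring
  rw [hfun, hval] at h2
  exact h2

lemma hasSum_geomFiber (y w : ℝ) (k : ℕ) :
    HasSum (fun n : ℕ => (k.factorial : ℝ) * (stirling2 n k : ℝ) * y ^ k * w ^ n / (n.factorial : ℝ))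
      ((y * (Real.exp w - 1)) ^ k) := by
  have h := (hasSum_Aux k w).mul_left (y ^ k)
  have hfun : (fun n : ℕ => y ^ k * (Aux n k * w ^ n / (n.factorial : ℝ)))
      = fun n : ℕ => (k.factorial : ℝ) * (stirling2 n k : ℝ) * y ^ k * w ^ n / (n.factorial : ℝ) := by
    funext n
    rw [← factorial_stirling2]
    ring
  rw [hfun] at h
  rwa [mul_pow]

lemma abs_exp_sub_one_le' (z : ℝ) : |Real.exp z - 1| ≤ Real.exp |z| - 1 := by
  rcases le_or_gt 0 z with h | h
  · rw [abs_of_nonneg h, abs_of_nonneg (by nlinarith [Real.one_le_exp h] : (0:ℝ) ≤ Real.exp z - 1)]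
  · have h1 : Real.exp z < 1 := Real.exp_lt_one_iff.mpr h
    rw [abs_of_neg h, abs_of_nonpos (by linarith : Real.exp z - 1 ≤ 0), Real.exp_neg]
    have ht := Real.exp_pos z
    nlinarith [sq_nonneg (Real.exp z - 1), mul_inv_cancel₀ ht.ne']


/-- for `|z|` small, `Σ_{n≥0} w_n(x) z^n/n!` converges to
`∫_0^∞ e^{-λ (1 - x (e^z - 1))} dλ`. -/
theorem geomPoly_egf_integral (x : ℝ) :
    ∃ r > (0 : ℝ), ∀ z : ℝ, |z| < r →
      HasSum (fun n : ℕ => geomPoly n x * z ^ n / (Nat.factorial n : ℝ))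
        (∫ l in Set.Ioi (0 : ℝ), Real.exp (-(l * (1 - x * (Real.exp z - 1))))) := by
  have hx1 : (0:ℝ) < |x| + 1 := by positivity
  have hinvpos : (0:ℝ) < (|x| + 1)⁻¹ := by positivity
  refine ⟨Real.log (1 + (|x| + 1)⁻¹), Real.log_pos (by linarith), fun z hz => ?_⟩
  set q : ℝ := x * (Real.exp z - 1) with hqdef
  have hr : Real.exp |z| < 1 + (|x| + 1)⁻¹ := by
    calc Real.exp |z| < Real.exp (Real.log (1 + (|x| + 1)⁻¹)) := Real.exp_lt_exp.mpr hz
      _ = 1 + (|x| + 1)⁻¹ := Real.exp_log (by linarith)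
  have hq' : |x| * (Real.exp |z| - 1) < 1 := by
    have h1 : |x| * (Real.exp |z| - 1) ≤ |x| * (|x| + 1)⁻¹ :=
      mul_le_mul_of_nonneg_left (by linarith) (abs_nonneg x)
    have h2 : |x| * (|x| + 1)⁻¹ < 1 := by
      rw [← div_eq_mul_inv, div_lt_one hx1]
      linarith [abs_nonneg x]
    linarith
  have hq'0 : 0 ≤ |x| * (Real.exp |z| - 1) :=
    mul_nonneg (abs_nonneg x) (by linarith [Real.one_le_exp (abs_nonneg z)])
  have habsq : |q| ≤ |x| * (Real.exp |z| - 1) := by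
    rw [hqdef, abs_mul]
    exact mul_le_mul_of_nonneg_left (abs_exp_sub_one_le' z) (abs_nonneg x)
  have hqlt : |q| < 1 := lt_of_le_of_lt habsq hq'
  have hc : 0 < 1 - q := by
    rcases abs_lt.mp hqlt with ⟨h1, h2⟩; linarith
  have hint : (∫ l in Set.Ioi (0:ℝ), Real.exp (-(l * (1 - q)))) = (1 - q)⁻¹ := by
    rw [integral_comp_mul_right_Ioi (fun u => Real.exp (-u)) 0 hc]
    simp [integral_exp_neg_Ioi_zero, integral_exp_Iic_zero]
  set F : ℕ × ℕ → ℝ :=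
    fun p => (p.1.factorial : ℝ) * (stirling2 p.2 p.1 : ℝ) * x ^ p.1 * z ^ p.2 / (p.2.factorial : ℝ)
    with hF
  have hk : ∀ k, HasSum (fun n => F (k, n)) (q ^ k) := fun k => hasSum_geomFiber x z k
  have habs : ∀ k, HasSum (fun n => |F (k, n)|) ((|x| * (Real.exp |z| - 1)) ^ k) := by
    intro k
    have h := hasSum_geomFiber |x| |z| k
    have hfun : (fun n : ℕ =>
        (k.factorial : ℝ) * (stirling2 n k : ℝ) * |x| ^ k * |z| ^ n / (n.factorial : ℝ))
        = fun n => |F (k, n)| := by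
      funext n
      rw [hF]
      rw [abs_div, abs_mul, abs_mul, abs_mul, abs_pow, abs_pow, Nat.abs_cast, Nat.abs_cast,
        Nat.abs_cast]
    rwa [hfun] at h
  have hsummable : Summable F := by
    apply Summable.of_abs
    refine (summable_prod_of_nonneg (fun p => abs_nonneg _)).2 ⟨fun k => (habs k).summable, ?_⟩
    have hts : (fun k => ∑' n, |F (k, n)|) = fun k => (|x| * (Real.exp |z| - 1)) ^ k :=
      funext fun k => (habs k).tsum_eq
    rw [hts]
    exact summable_geometric_of_lt_one hq'0 hq'
  obtain ⟨a, ha⟩ := hsummable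
  have hka : HasSum (fun k => q ^ k) a := ha.prod_fiberwise hk
  have hgeo : HasSum (fun k => q ^ k) (1 - q)⁻¹ :=
    hasSum_geometric_of_norm_lt_one (by rwa [Real.norm_eq_abs])
  have haq : a = (1 - q)⁻¹ := hka.unique hgeo
  have hswap : HasSum (F ∘ (Equiv.prodComm ℕ ℕ)) a := ((Equiv.prodComm ℕ ℕ).hasSum_iff).2 ha
  have hn : ∀ n, HasSum (fun k => (F ∘ (Equiv.prodComm ℕ ℕ)) (n, k))
      (geomPoly n x * z ^ n / (n.factorial : ℝ)) := by
    intro n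
    have h0 : ∀ k ∉ Finset.range (n + 1), F (k, n) = 0 := by
      intro k hk'
      have hzero : stirling2 n k = 0 := stirling2_eq_zero (by simpa using hk')
      simp [hF, hzero]
    have hsum : HasSum (fun k => F (k, n)) (∑ k ∈ Finset.range (n + 1), F (k, n)) :=
      hasSum_sum_of_ne_finset_zero h0
    have heq : (∑ k ∈ Finset.range (n + 1), F (k, n)) = geomPoly n x * z ^ n / (n.factorial : ℝ) := by
      rw [geomPoly, Finset.sum_mul, Finset.sum_div]
    exact heq ▸ hsum
  have final : HasSum (fun n => geomPoly n x * z ^ n / (n.factorial : ℝ)) a :=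
    hswap.prod_fiberwise hn
  rw [hint, ← haq]
  exact final
end
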